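/- (Theorem 2.) Let U : Ω → ℂ be differentiable on an open set Ω ⊆ ℂ, let Ψ₀ and Φ₀ be matrix solutions of DΨ = 0 and D^∨Φ = 0, and let S = S(Φ₀,Ψ₀) be a primitive of Γω(Φ₀,Ψ₀) which is invertible at every point of Ω (so S is the u(2)-valued Weierstrass immersion defined by the spinors Ψ₀, Φ₀). Set S' = Γ Sᵀ Γ (a primitive of Γω(Ψ₀,Φ₀)), Ψ̃₀ = Ψ₀ S⁻¹, and Φ̃₀ = Φ₀ (S')⁻¹. Then the map S⁻¹ : Ω → u(2), obtained from the surface S by applying the composition of the inversion and the reflection (x¹,x²,x³,x⁴) ↦ (−x¹,−x²,−x³,x⁴), satisfies the Weierstrass derivative equations with spinors Ψ̃₀, Φ̃₀: ∂(S⁻¹) = −(i/2)·Γ·Φ̃₀ᵀ(σ₃+1)Ψ̃₀ and ∂̄(S⁻¹) = −(i/2)·Γ·Φ̃₀ᵀ(σ₃−1)Ψ̃₀. Hence the surface S⁻¹ is defined by the spinors Ψ̃₀ and Φ̃₀ via the Weierstrass representation. -/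

import Mathlib

open Complex Matrix Finset

noncomputable section

/-- Wirtinger derivative `∂f = ½(f_x − i f_y)`. -/
def wdz (f : ℂ → ℂ) (z : ℂ) : ℂ :=
  (1 / 2) * (fderiv ℝ f z 1 - Complex.I * fderiv ℝ f z Complex.I)

/-- Conjugate Wirtinger derivative `∂̄f = ½(f_x + i f_y)`. -/
def wdzb (f : ℂ → ℂ) (z : ℂ) : ℂ :=
  (1 / 2) * (fderiv ℝ f z 1 + Complex.I * fderiv ℝ f z Complex.I)

/-- The Dirac equation `Dψ = 0` with potential `U` on `Ω`:
`∂ψ₂ + Uψ₁ = 0` and `−∂̄ψ₁ + Ūψ₂ = 0`. -/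
def DiracEq (U ψ₁ ψ₂ : ℂ → ℂ) (Ω : Set ℂ) : Prop :=
  ∀ z ∈ Ω, wdz ψ₂ z + U z * ψ₁ z = 0 ∧
    -wdzb ψ₁ z + (starRingEnd ℂ) (U z) * ψ₂ z = 0

def Gam : Matrix (Fin 2) (Fin 2) ℂ := !![0, 1; -1, 0]

def sig3 : Matrix (Fin 2) (Fin 2) ℂ := !![1, 0; 0, -1]

/-- The quaternionic matrix associated to a spinor. -/
def spinMat (ψ₁ ψ₂ : ℂ → ℂ) (z : ℂ) : Matrix (Fin 2) (Fin 2) ℂ :=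
  !![ψ₁ z, -(starRingEnd ℂ) (ψ₂ z); ψ₂ z, (starRingEnd ℂ) (ψ₁ z)]

def wdzM (F : ℂ → Matrix (Fin 2) (Fin 2) ℂ) (z : ℂ) : Matrix (Fin 2) (Fin 2) ℂ :=
  Matrix.of fun i j => wdz (fun w => F w i j) z

def wdzbM (F : ℂ → Matrix (Fin 2) (Fin 2) ℂ) (z : ℂ) : Matrix (Fin 2) (Fin 2) ℂ :=
  Matrix.of fun i j => wdzb (fun w => F w i j) z

/-- `S` is a primitive of `Γω(Φ,Ψ)` on `Ω`. -/
def IsPrimitive (Φ Ψ S : ℂ → Matrix (Fin 2) (Fin 2) ℂ) (Ω : Set ℂ) : Prop :=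
  ∀ z ∈ Ω,
    wdzM S z = (-(Complex.I / 2)) • (Gam * (Φ z)ᵀ * (sig3 + 1) * Ψ z) ∧
    wdzbM S z = (-(Complex.I / 2)) • (Gam * (Φ z)ᵀ * (sig3 - 1) * Ψ z)

def MatDiffOn (F : ℂ → Matrix (Fin 2) (Fin 2) ℂ) (Ω : Set ℂ) : Prop :=
  ∀ z ∈ Ω, ∀ i j, DifferentiableAt ℝ (fun w => F w i j) z

/-- A matrix solution of the Dirac equation: both columns solve `Dψ = 0`. -/
def MatDiracEq (U : ℂ → ℂ) (Ψ : ℂ → Matrix (Fin 2) (Fin 2) ℂ) (Ω : Set ℂ) : Prop :=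
  ∀ j : Fin 2, DiracEq U (fun z => Ψ z 0 j) (fun z => Ψ z 1 j) Ω

/-- The Weierstrass derivatives `x^k_z` of the Weierstrass representation. -/
def weierXz (ψ₁ ψ₂ φ₁ φ₂ : ℂ) : Fin 4 → ℂ :=
  ![(Complex.I / 2) * ((starRingEnd ℂ) φ₂ * (starRingEnd ℂ) ψ₂ + φ₁ * ψ₁),
    (1 / 2) * ((starRingEnd ℂ) φ₂ * (starRingEnd ℂ) ψ₂ - φ₁ * ψ₁),
    (1 / 2) * ((starRingEnd ℂ) φ₂ * ψ₁ + φ₁ * (starRingEnd ℂ) ψ₂),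
    (Complex.I / 2) * ((starRingEnd ℂ) φ₂ * ψ₁ - φ₁ * (starRingEnd ℂ) ψ₂)]

/-- Identification of `ℝ⁴` with `u(2)`. -/
def toU2 (x : Fin 4 → ℝ) : Matrix (Fin 2) (Fin 2) ℂ :=
  !![Complex.I * (x 2 : ℂ) + (x 3 : ℂ), -(x 0 : ℂ) - Complex.I * (x 1 : ℂ);
     (x 0 : ℂ) - Complex.I * (x 1 : ℂ), -Complex.I * (x 2 : ℂ) + (x 3 : ℂ)]


section WirtingerAux

variable {f g : ℂ → ℂ} {z : ℂ}

lemma wdz_congr (h : f =ᶠ[nhds z] g) : wdz f z = wdz g z := by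
  unfold wdz; rw [Filter.EventuallyEq.fderiv_eq h]

lemma wdzb_congr (h : f =ᶠ[nhds z] g) : wdzb f z = wdzb g z := by
  unfold wdzb; rw [Filter.EventuallyEq.fderiv_eq h]

lemma wdz_const (c : ℂ) : wdz (fun _ => c) z = 0 := by
  unfold wdz; simp

lemma wdzb_const (c : ℂ) : wdzb (fun _ => c) z = 0 := by
  unfold wdzb; simp

lemma wdz_add (hf : DifferentiableAt ℝ f z) (hg : DifferentiableAt ℝ g z) :
    wdz (fun w => f w + g w) z = wdz f z + wdz g z := by
  unfold wdz
  rw [fderiv_fun_add hf hg]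
  simp; ring

lemma wdzb_add (hf : DifferentiableAt ℝ f z) (hg : DifferentiableAt ℝ g z) :
    wdzb (fun w => f w + g w) z = wdzb f z + wdzb g z := by
  unfold wdzb
  rw [fderiv_fun_add hf hg]
  simp; ring

lemma wdz_mul (hf : DifferentiableAt ℝ f z) (hg : DifferentiableAt ℝ g z) :
    wdz (fun w => f w * g w) z = wdz f z * g z + f z * wdz g z := by
  unfold wdz
  rw [fderiv_fun_mul hf hg]
  simp [smul_eq_mul]; ring

lemma wdzb_mul (hf : DifferentiableAt ℝ f z) (hg : DifferentiableAt ℝ g z) :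
    wdzb (fun w => f w * g w) z = wdzb f z * g z + f z * wdzb g z := by
  unfold wdzb
  rw [fderiv_fun_mul hf hg]
  simp [smul_eq_mul]; ring

end WirtingerAux

lemma wdzM_mul {A B : ℂ → Matrix (Fin 2) (Fin 2) ℂ} {z : ℂ}
    (hA : ∀ i j, DifferentiableAt ℝ (fun w => A w i j) z)
    (hB : ∀ i j, DifferentiableAt ℝ (fun w => B w i j) z) :
    wdzM (fun w => A w * B w) z = wdzM A z * B z + A z * wdzM B z := by
  ext i j
  simp only [wdzM, Matrix.of_apply, Matrix.add_apply, Matrix.mul_apply, Fin.sum_univ_two]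
  rw [wdz_add (f := fun w => A w i 0 * B w 0 j) (g := fun w => A w i 1 * B w 1 j) ((hA i 0).mul (hB 0 j)) ((hA i 1).mul (hB 1 j)),
      wdz_mul (hA i 0) (hB 0 j), wdz_mul (hA i 1) (hB 1 j)]
  ring

lemma wdzbM_mul {A B : ℂ → Matrix (Fin 2) (Fin 2) ℂ} {z : ℂ}
    (hA : ∀ i j, DifferentiableAt ℝ (fun w => A w i j) z)
    (hB : ∀ i j, DifferentiableAt ℝ (fun w => B w i j) z) :
    wdzbM (fun w => A w * B w) z = wdzbM A z * B z + A z * wdzbM B z := by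
  ext i j
  simp only [wdzbM, Matrix.of_apply, Matrix.add_apply, Matrix.mul_apply, Fin.sum_univ_two]
  rw [wdzb_add (f := fun w => A w i 0 * B w 0 j) (g := fun w => A w i 1 * B w 1 j) ((hA i 0).mul (hB 0 j)) ((hA i 1).mul (hB 1 j)),
      wdzb_mul (hA i 0) (hB 0 j), wdzb_mul (hA i 1) (hB 1 j)]
  ring

lemma Gam_mul_Gam : Gam * Gam = -1 := by
  ext i j
  fin_cases i <;> fin_cases j <;>
    simp [Gam, Matrix.mul_apply, Fin.sum_univ_two, Matrix.one_apply]

lemma Gam_transpose : Gamᵀ = -Gam := by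
  ext i j
  fin_cases i <;> fin_cases j <;> simp [Gam]

lemma Gam_inv : Gam⁻¹ = -Gam :=
  Matrix.inv_eq_right_inv (by rw [Matrix.mul_neg, Gam_mul_Gam, neg_neg])

/-- Theorem 2: the surface `S⁻¹`, obtained from the Weierstrass immersion
`S = S(Φ₀,Ψ₀)` by the composition of the inversion and the reflection
`(x¹,x²,x³,x⁴) ↦ (−x¹,−x²,−x³,x⁴)`, satisfies the Weierstrass derivative equations with
spinors `Ψ̃₀ = Ψ₀ S⁻¹` and `Φ̃₀ = Φ₀ (ΓSᵀΓ)⁻¹`. -/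
theorem inverted_surface_weierstrass_spinors
    (Ω : Set ℂ) (hΩ : IsOpen Ω) (U ψ₁ ψ₂ φ₁ φ₂ : ℂ → ℂ)
    (hU : ∀ z ∈ Ω, DifferentiableAt ℝ U z)
    (hψ₁ : ∀ z ∈ Ω, DifferentiableAt ℝ ψ₁ z)
    (hψ₂ : ∀ z ∈ Ω, DifferentiableAt ℝ ψ₂ z)
    (hφ₁ : ∀ z ∈ Ω, DifferentiableAt ℝ φ₁ z)
    (hφ₂ : ∀ z ∈ Ω, DifferentiableAt ℝ φ₂ z)
    (hψ : DiracEq U ψ₁ ψ₂ Ω)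
    (hφ : DiracEq (fun z => (starRingEnd ℂ) (U z)) φ₁ φ₂ Ω)
    (S : ℂ → Matrix (Fin 2) (Fin 2) ℂ)
    (hS : IsPrimitive (spinMat φ₁ φ₂) (spinMat ψ₁ ψ₂) S Ω)
    (hSdiff : MatDiffOn S Ω)
    (hSinv : ∀ z ∈ Ω, IsUnit (S z).det) :
    ∀ z ∈ Ω,
      wdzM (fun w => (S w)⁻¹) z =
        (-(Complex.I / 2)) •
          (Gam * (spinMat φ₁ φ₂ z * (Gam * (S z)ᵀ * Gam)⁻¹)ᵀ * (sig3 + 1) *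
            (spinMat ψ₁ ψ₂ z * (S z)⁻¹)) ∧
      wdzbM (fun w => (S w)⁻¹) z =
        (-(Complex.I / 2)) •
          (Gam * (spinMat φ₁ φ₂ z * (Gam * (S z)ᵀ * Gam)⁻¹)ᵀ * (sig3 - 1) *
            (spinMat ψ₁ ψ₂ z * (S z)⁻¹)) := by
  intro z hz
  have hdetne : (S z).det ≠ 0 := (hSinv z hz).ne_zero
  -- det is continuous on Ω
  have hdetcont : ContinuousOn (fun w => (S w).det) Ω := by
    intro w hw
    have hc : ∀ i j, ContinuousAt (fun w => S w i j) w :=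
      fun i j => (hSdiff w hw i j).continuousAt
    simp only [Matrix.det_fin_two]
    exact (((hc 0 0).mul (hc 1 1)).sub ((hc 0 1).mul (hc 1 0))).continuousWithinAt
  have hopen : IsOpen (Ω ∩ (fun w => (S w).det) ⁻¹' {(0 : ℂ)}ᶜ) :=
    hdetcont.isOpen_inter_preimage hΩ isOpen_compl_singleton
  have hzV : z ∈ Ω ∩ (fun w => (S w).det) ⁻¹' {(0 : ℂ)}ᶜ := ⟨hz, hdetne⟩
  have hev : ∀ᶠ w in nhds z, S w * (S w)⁻¹ = 1 := by
    filter_upwards [hopen.mem_nhds hzV] with w hw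
    exact Matrix.mul_nonsing_inv _ (isUnit_iff_ne_zero.mpr hw.2)
  -- differentiability of the entries of S⁻¹ at z
  have hdet : DifferentiableAt ℝ (fun w => (S w).det) z := by
    simp only [Matrix.det_fin_two]
    exact ((hSdiff z hz 0 0).mul (hSdiff z hz 1 1)).sub
      ((hSdiff z hz 0 1).mul (hSdiff z hz 1 0))
  have hinvdet : DifferentiableAt ℝ (fun w => ((S w).det)⁻¹) z :=
    (differentiableAt_inv (𝕜 := ℝ) hdetne).comp z hdet
  have hFdiff : ∀ i j, DifferentiableAt ℝ (fun w => (S w)⁻¹ i j) z := by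
    intro i j
    have heq : (fun w => (S w)⁻¹ i j) =
        fun w => ((S w).det)⁻¹ * (S w).adjugate i j := by
      funext w
      rw [Matrix.inv_def, Ring.inverse_eq_inv']
      simp [smul_eq_mul]
    rw [heq]
    refine hinvdet.mul ?_
    have hadj : ∀ w, (S w).adjugate = !![S w 1 1, -(S w 0 1); -(S w 1 0), S w 0 0] :=
      fun w => Matrix.adjugate_fin_two _
    simp only [hadj]
    fin_cases i <;> fin_cases j <;> simp <;> exact hSdiff z hz _ _
  -- derivative of the inverse
  have hW0 : wdzM (fun w => S w * (S w)⁻¹) z = 0 := by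
    ext i j
    simp only [wdzM, Matrix.of_apply]
    rw [wdz_congr (f := fun w => (S w * (S w)⁻¹) i j)
        (g := fun _ => (1 : Matrix (Fin 2) (Fin 2) ℂ) i j)
        (hev.mono fun w hw => by simp only [hw]), wdz_const]
    simp
  have hWb0 : wdzbM (fun w => S w * (S w)⁻¹) z = 0 := by
    ext i j
    simp only [wdzbM, Matrix.of_apply]
    rw [wdzb_congr (f := fun w => (S w * (S w)⁻¹) i j)
        (g := fun _ => (1 : Matrix (Fin 2) (Fin 2) ℂ) i j)
        (hev.mono fun w hw => by simp only [hw]), wdzb_const]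
    simp
  have hSd : ∀ i j, DifferentiableAt ℝ (fun w => S w i j) z := hSdiff z hz
  have hadd : wdzM S z * (S z)⁻¹ + S z * wdzM (fun w => (S w)⁻¹) z = 0 := by
    rw [← wdzM_mul hSd hFdiff, hW0]
  have haddb : wdzbM S z * (S z)⁻¹ + S z * wdzbM (fun w => (S w)⁻¹) z = 0 := by
    rw [← wdzbM_mul hSd hFdiff, hWb0]
  have hSS : (S z)⁻¹ * S z = 1 := Matrix.nonsing_inv_mul _ (hSinv z hz)
  have hWF : wdzM (fun w => (S w)⁻¹) z = -((S z)⁻¹ * wdzM S z * (S z)⁻¹) := by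
    have h2 := congrArg (fun M => (S z)⁻¹ * M) hadd
    simp only [Matrix.mul_add, Matrix.mul_zero, ← Matrix.mul_assoc, hSS,
      Matrix.one_mul] at h2
    exact eq_neg_of_add_eq_zero_right h2
  have hWFb : wdzbM (fun w => (S w)⁻¹) z = -((S z)⁻¹ * wdzbM S z * (S z)⁻¹) := by
    have h2 := congrArg (fun M => (S z)⁻¹ * M) haddb
    simp only [Matrix.mul_add, Matrix.mul_zero, ← Matrix.mul_assoc, hSS,
      Matrix.one_mul] at h2
    exact eq_neg_of_add_eq_zero_right h2
  -- key transpose/inverse identity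
  have hkey : ((Gam * (S z)ᵀ * Gam)⁻¹)ᵀ = Gam * (S z)⁻¹ * Gam := by
    rw [Matrix.transpose_nonsing_inv, Matrix.transpose_mul, Matrix.transpose_mul,
      Matrix.transpose_transpose, Gam_transpose]
    rw [show -Gam * (S z * -Gam) = Gam * (S z * Gam) by
      simp [Matrix.mul_neg, Matrix.neg_mul]]
    rw [Matrix.mul_inv_rev, Matrix.mul_inv_rev, Gam_inv]
    simp [Matrix.mul_neg, Matrix.neg_mul, Matrix.mul_assoc]
  obtain ⟨h1, h2⟩ := hS z hz
  constructor
  · rw [hWF, h1, Matrix.transpose_mul, hkey]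
    simp only [Matrix.mul_smul, Matrix.smul_mul, smul_neg, neg_neg, ← Matrix.mul_assoc]
    rw [show Gam * Gam * (S z)⁻¹ * Gam = -((S z)⁻¹ * Gam) by
      rw [Gam_mul_Gam]; simp [Matrix.neg_mul]]
    simp only [Matrix.neg_mul, smul_neg, neg_neg, Matrix.mul_assoc]
  · rw [hWFb, h2, Matrix.transpose_mul, hkey]
    simp only [Matrix.mul_smul, Matrix.smul_mul, smul_neg, neg_neg, ← Matrix.mul_assoc]
    rw [show Gam * Gam * (S z)⁻¹ * Gam = -((S z)⁻¹ * Gam) by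
      rw [Gam_mul_Gam]; simp [Matrix.neg_mul]]
    simp only [Matrix.neg_mul, smul_neg, neg_neg, Matrix.mul_assoc]
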